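/- Let κ ≥ 1 and p > 0. Let Ω be a probability space and let V assign to each ω a function V(ω) : ℝ → ℝ that is almost surely nondecreasing and concave on [0,1], with V(ω)(0) = 0, differentiable at 0 with derivative V'(ω)(0) ≤ κ·V(ω)(1). Let Y* : Ω → [0,1] be measurable with Y*(ω) maximizing z ↦ V(ω)(z) − p·z over [0,1] almost surely. Then E[Y*] ≥ Pr[ V'(ω)(0) ≥ 2κ·p ] / (2κ − 1). -/

import Mathlib

open MeasureTheory ProbabilityTheory Topology Filter

lemma key_lemma (κ p : ℝ) (hκ : 1 ≤ κ) (hp : 0 < p) (V : ℝ → ℝ) (D y : ℝ)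
    (hconc : ConcaveOn ℝ (Set.Icc (0:ℝ) 1) V) (hV0 : V 0 = 0)
    (hderiv : HasDerivWithinAt V D (Set.Icc (0:ℝ) 1) 0) (hcurv : D ≤ κ * V 1)
    (hy : y ∈ Set.Icc (0:ℝ) 1)
    (hopt : ∀ z ∈ Set.Icc (0:ℝ) 1, V z - p * z ≤ V y - p * y)
    (hD : 2 * κ * p ≤ D) : (2 * κ - 1)⁻¹ ≤ y := by
  have hκ0 : (0:ℝ) < κ := by linarith
  have hV1 : 2 * p ≤ V 1 := by nlinarith
  have h1m : (1:ℝ) ∈ Set.Icc (0:ℝ) 1 := by norm_num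
  have hopt1 := hopt 1 h1m
  have hy0 : 0 < y := by
    rcases lt_or_eq_of_le hy.1 with h | h
    · exact h
    · exfalso; rw [← h] at hopt1; simp [hV0] at hopt1; linarith
  -- slope inequality: V y / y ≤ D
  have hslope : V y / y ≤ D := by
    have htend := hasDerivWithinAt_iff_tendsto_slope.mp hderiv
    have hsub : Set.Ioo (0:ℝ) 1 ⊆ Set.Icc (0:ℝ) 1 \ {0} :=
      fun t ht => ⟨⟨ht.1.le, ht.2.le⟩, ne_of_gt ht.1⟩
    have hne : (𝓝[Set.Icc (0:ℝ) 1 \ {0}] (0:ℝ)).NeBot :=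
      (left_nhdsWithin_Ioo_neBot (by norm_num : (0:ℝ) < 1)).mono
        (nhdsWithin_mono 0 hsub)
    refine ge_of_tendsto htend ?_
    have hmem : Set.Iio y ∈ 𝓝[Set.Icc (0:ℝ) 1 \ {0}] (0:ℝ) :=
      nhdsWithin_le_nhds (Iio_mem_nhds hy0)
    filter_upwards [hmem, self_mem_nhdsWithin] with t ht hts
    have ht0 : 0 < t := lt_of_le_of_ne hts.1.1 (Ne.symm hts.2)
    have hty : t < y := ht
    -- concavity: (t/y) * V y ≤ V t
    have ha : (0:ℝ) ≤ 1 - t / y := by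
      have : t / y ≤ 1 := (div_le_one hy0).mpr hty.le
      linarith
    have hb : (0:ℝ) ≤ t / y := div_nonneg ht0.le hy0.le
    have h0m : (0:ℝ) ∈ Set.Icc (0:ℝ) 1 := by norm_num
    have hcc := hconc.2 h0m hy ha hb (by ring)
    have hcc' : (t / y) * V y ≤ V t := by
      have heq : (1 - t / y) • (0:ℝ) + (t / y) • y = t := by
        field_simp
        simp only [smul_eq_mul, mul_zero, zero_add]
        field_simp
      rw [heq] at hcc
      simpa [hV0] using hcc
    rw [slope_def_field]
    have : V y / y ≤ V t / t := by
      rw [div_le_div_iff₀ hy0 ht0]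
      calc V y * t = (t / y) * V y * y := by field_simp
        _ ≤ V t * y := by
            have := mul_le_mul_of_nonneg_right hcc' hy0.le
            linarith
    simpa [hV0] using this
  have hVy : V y ≤ D * y := by
    have := mul_le_mul_of_nonneg_right hslope hy0.le
    calc V y = V y / y * y := by field_simp
      _ ≤ D * y := this
  -- final algebra
  have h2κ : (0:ℝ) < 2 * κ - 1 := by linarith
  rw [← one_div, div_le_iff₀ h2κ]
  nlinarith [mul_le_mul_of_nonneg_right hcurv hy0.le,
    mul_nonneg (by linarith : (0:ℝ) ≤ κ - 1) (by linarith : (0:ℝ) ≤ D - 2 * κ * p),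
    mul_pos hκ0 hy0, hy.2]

/-- For a random valuation V with curvature at most κ and a.s. utility maximizer
Y* at price p, E[Y*] ≥ Pr[V'(0) ≥ 2κp]/(2κ − 1). -/
theorem stmt_11 {Ω : Type*} [MeasureSpace Ω] [IsProbabilityMeasure (ℙ : Measure Ω)]
    (κ p : ℝ) (hκ : 1 ≤ κ) (hp : 0 < p)
    (V : Ω → ℝ → ℝ) (D Ystar : Ω → ℝ)
    (hDmeas : Measurable D) (hYmeas : Measurable Ystar)
    (hprop : ∀ᵐ ω, MonotoneOn (V ω) (Set.Icc (0:ℝ) 1) ∧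
      ConcaveOn ℝ (Set.Icc (0:ℝ) 1) (V ω) ∧ V ω 0 = 0 ∧
      HasDerivWithinAt (V ω) (D ω) (Set.Icc (0:ℝ) 1) 0 ∧ D ω ≤ κ * V ω 1 ∧
      Ystar ω ∈ Set.Icc (0:ℝ) 1 ∧
      ∀ z ∈ Set.Icc (0:ℝ) 1, V ω z - p * z ≤ V ω (Ystar ω) - p * Ystar ω) :
    ∫ ω, Ystar ω ≥ (ℙ {ω | 2 * κ * p ≤ D ω}).toReal / (2 * κ - 1) := by
  set A : Set Ω := {ω | 2 * κ * p ≤ D ω} with hA_def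
  have hA : MeasurableSet A := measurableSet_le measurable_const hDmeas
  set f : Ω → ℝ := A.indicator (fun _ => (2 * κ - 1)⁻¹) with hf_def
  have hle : ∀ᵐ ω, f ω ≤ Ystar ω := by
    filter_upwards [hprop] with ω h
    obtain ⟨_, hconc, hV0, hderiv, hcurv, hyIcc, hopt⟩ := h
    by_cases hω : ω ∈ A
    · rw [hf_def, Set.indicator_of_mem hω]
      exact key_lemma κ p hκ hp (V ω) (D ω) (Ystar ω) hconc hV0 hderiv hcurv hyIcc hopt hω
    · rw [hf_def, Set.indicator_of_notMem hω]
      exact hyIcc.1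
  have hint1 : Integrable f := (integrable_const _).indicator hA
  have hint2 : Integrable Ystar := by
    refine (integrable_const (1:ℝ)).mono' hYmeas.aestronglyMeasurable ?_
    filter_upwards [hprop] with ω h
    have := h.2.2.2.2.2.1
    rw [Real.norm_eq_abs, abs_le]
    exact ⟨by linarith [this.1], this.2⟩
  have hint : ∫ ω, f ω = (ℙ A).toReal * (2 * κ - 1)⁻¹ := by
    rw [hf_def, integral_indicator_const _ hA, smul_eq_mul]
    rfl
  have hmono := integral_mono_ae hint1 hint2 hle
  rw [hint] at hmono
  rw [ge_iff_le, div_eq_mul_inv]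
  exact hmono
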